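/- Suppose Φ : ℕ → ℝ satisfies Φ(0) = 1 and, for all 1 ≤ i ≤ n, Φ(i) ≤ (e^{λi}/i)·Σ_{j=0}^{i-1} e^{k'λ j} where λ = (ln k')/n and k' = max{e, k/2} for some k ≥ 0. Then Φ(i) ≤ e^{k'λ i} for all 0 ≤ i ≤ n. -/

import Mathlib

/-- If `Φ 0 = 1` and for all `1 ≤ i ≤ n`,
`Φ i ≤ (e^{λ i}/i) ∑_{j=0}^{i-1} e^{k' λ j}` with `λ = (ln k')/n`, `k' = max{e, k/2}`,
then `Φ i ≤ e^{k' λ i}` for all `0 ≤ i ≤ n`. -/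
theorem stmt10 (n : ℕ) (hn : 1 ≤ n) (k : ℝ) (hk : 0 ≤ k)
    (k' lam : ℝ) (hk' : k' = max (Real.exp 1) (k / 2))
    (hlam : lam = Real.log k' / n)
    (Φ : ℕ → ℝ) (h0 : Φ 0 = 1)
    (hrec : ∀ i : ℕ, 1 ≤ i → i ≤ n →
      Φ i ≤ (Real.exp (lam * i) / i) * ∑ j ∈ Finset.range i, Real.exp (k' * lam * j)) :
    ∀ i : ℕ, i ≤ n → Φ i ≤ Real.exp (k' * lam * i) := by
  have he1 : (1:ℝ) ≤ Real.exp 1 := by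
    have := Real.add_one_le_exp (1:ℝ); linarith
  have hek' : Real.exp 1 ≤ k' := hk' ▸ le_max_left _ _
  have hk'1 : (1:ℝ) ≤ k' := le_trans he1 hek'
  have hk'pos : (0:ℝ) < k' := by linarith
  have hnpos : (0:ℝ) < (n:ℝ) := by exact_mod_cast hn
  have hlog : (1:ℝ) ≤ Real.log k' := by
    rw [show (1:ℝ) = Real.log (Real.exp 1) by rw [Real.log_exp]]
    exact Real.log_le_log (Real.exp_pos 1) hek'
  have hlam0 : 0 ≤ lam := by
    rw [hlam]; positivity
  have hlamn : lam * n = Real.log k' := by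
    rw [hlam]; field_simp
  have hexpn : Real.exp (lam * n) = k' := by
    rw [hlamn, Real.exp_log hk'pos]
  -- Key inequality : for i with i+1 ≤ n, i * e^λ + e^{λ(i+1)} ≤ (i+1) e^{k'λ}
  have key : ∀ i : ℕ, (i:ℝ) + 1 ≤ (n:ℝ) →
      (i:ℝ) * Real.exp lam + Real.exp (lam * ((i:ℝ)+1)) ≤ ((i:ℝ)+1) * Real.exp (k' * lam) := by
    intro i hin
    have hi0 : (0:ℝ) ≤ (i:ℝ) := Nat.cast_nonneg i
    have ha : (0:ℝ) ≤ ((n:ℝ) - i)/n := by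
      apply div_nonneg _ hnpos.le; linarith
    have hb : (0:ℝ) ≤ (i:ℝ)/n := div_nonneg hi0 hnpos.le
    have hab : ((n:ℝ) - i)/n + (i:ℝ)/n = 1 := by field_simp; ring
    have hc := convexOn_exp.2 (Set.mem_univ (lam*1)) (Set.mem_univ (lam*((n:ℝ)+1))) ha hb hab
    simp only [smul_eq_mul] at hc
    have harg : ((n:ℝ) - i)/n * (lam*1) + (i:ℝ)/n * (lam*((n:ℝ)+1)) = lam * ((i:ℝ)+1) := by
      field_simp; ring
    rw [harg] at hc
    have hexpn1 : Real.exp (lam*((n:ℝ)+1)) = k' * Real.exp lam := by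
      rw [mul_add, Real.exp_add, mul_one, hexpn]
    rw [hexpn1] at hc
    -- hc : exp (lam*(i+1)) ≤ (n-i)/n * exp (lam*1) + i/n * (k' * exp lam)
    rw [mul_one] at hc
    have hexpk : Real.exp lam * (1 + (k'-1)*lam) ≤ Real.exp (k' * lam) := by
      have h1 : 1 + (k'-1)*lam ≤ Real.exp ((k'-1)*lam) := by
        have := Real.add_one_le_exp ((k'-1)*lam); linarith
      calc Real.exp lam * (1 + (k'-1)*lam)
          ≤ Real.exp lam * Real.exp ((k'-1)*lam) := by
            apply mul_le_mul_of_nonneg_left h1 (Real.exp_pos lam).le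
        _ = Real.exp (k' * lam) := by rw [← Real.exp_add]; ring_nf
    -- (i:ℝ)/n ≤ ((i:ℝ)+1) * lam
    have h1 : (i:ℝ)/n ≤ ((i:ℝ)+1) * lam := by
      rw [hlam]
      rw [div_le_iff₀ hnpos]
      have : ((i:ℝ)+1) * (Real.log k' / n) * n = ((i:ℝ)+1) * Real.log k' := by
        field_simp
      rw [this]
      nlinarith
    have hE : (0:ℝ) < Real.exp lam := Real.exp_pos lam
    -- combine: exp(lam*(i+1)) ≤ exp lam * (1 + (k'-1)*(i/n))
    have hc' : Real.exp (lam * ((i:ℝ)+1)) ≤ Real.exp lam * (1 + (k'-1) * ((i:ℝ)/n)) := by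
      have : ((n:ℝ) - i)/n * Real.exp lam + (i:ℝ)/n * (k' * Real.exp lam)
          = Real.exp lam * (1 + (k'-1) * ((i:ℝ)/n)) := by
        field_simp; ring
      linarith [hc, this.symm.le]
    have hexpk' : ((i:ℝ)+1) * (Real.exp lam * (1 + (k'-1)*lam)) ≤ ((i:ℝ)+1) * Real.exp (k' * lam) :=
      mul_le_mul_of_nonneg_left hexpk (by linarith)
    nlinarith [mul_le_mul_of_nonneg_left h1 (mul_nonneg (by linarith : (0:ℝ) ≤ k' - 1) hE.le)]
  -- Main bound by induction
  have main : ∀ i : ℕ, i ≤ n → 1 ≤ i →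
      Real.exp (lam * i) * ∑ j ∈ Finset.range i, Real.exp (k' * lam * j)
        ≤ (i:ℝ) * Real.exp (k' * lam * i) := by
    intro i
    induction i with
    | zero => intro _ h; omega
    | succ m ih =>
      intro hin _
      rcases Nat.eq_zero_or_pos m with hm | hm
      · subst hm
        norm_num [Finset.sum_range_one]
        nlinarith
      · have hb := ih (by omega) hm
        have hmn : (m:ℝ) + 1 ≤ (n:ℝ) := by exact_mod_cast hin
        have hkey := key m hmn
        rw [Finset.sum_range_succ]
        push_cast
        have e1 : Real.exp (lam * ((m:ℝ)+1)) = Real.exp lam * Real.exp (lam * m) := by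
          rw [← Real.exp_add]; ring_nf
        have e2 : Real.exp (k' * lam * ((m:ℝ)+1)) = Real.exp (k' * lam * m) * Real.exp (k' * lam) := by
          rw [← Real.exp_add]; ring_nf
        have hE : (0:ℝ) < Real.exp lam := Real.exp_pos lam
        have hE2 : (0:ℝ) < Real.exp (k' * lam * m) := Real.exp_pos _
        rw [e1, e2]
        rw [e1] at hkey
        nlinarith [mul_le_mul_of_nonneg_left hb hE.le,
          mul_le_mul_of_nonneg_left hkey hE2.le]
  intro i hin
  rcases Nat.eq_zero_or_pos i with hi | hi
  · subst hi
    simp [h0]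
  · have h1 := hrec i hi hin
    have h2 := main i hin hi
    have hipos : (0:ℝ) < (i:ℝ) := by exact_mod_cast hi
    calc Φ i ≤ (Real.exp (lam * i) / i) * ∑ j ∈ Finset.range i, Real.exp (k' * lam * j) := h1
      _ = (Real.exp (lam * i) * ∑ j ∈ Finset.range i, Real.exp (k' * lam * j)) / i := by ring
      _ ≤ ((i:ℝ) * Real.exp (k' * lam * i)) / i := by
          exact (div_le_div_iff_of_pos_right hipos).2 h2
      _ = Real.exp (k' * lam * i) := by field_simp
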